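/- For every ε > 0 there exists δ₀ ∈ (0,1) such that for all p ∈ [α,β], all δ ∈ (0,δ₀], and all a, b ∈ ℝ^n: | |a+δb|^p − |a|^p − δ p |a|^{p−2} (a·b) | ≤ ε δ ( |a|^p + |b|^p ). -/

import Mathlib

set_option maxHeartbeats 1000000

open Real
open scoped RealInnerProductSpace

open Real

/-- `(x^2)^e = x^(2e)` for `x ≥ 0`. -/
lemma aux_pow2_rpow (x e : ℝ) (hx : 0 ≤ x) : ((x^2 : ℝ)) ^ e = x ^ (2*e) := by
  rw [← Real.rpow_natCast x 2, ← Real.rpow_mul hx]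
  norm_num

/-- Young-type: `A^(p-1) * B ≤ A^p + B^p`. -/
lemma aux_young (A B p : ℝ) (hA : 0 ≤ A) (hB : 0 ≤ B) (hp : 1 < p) :
    A ^ (p-1) * B ≤ A ^ p + B ^ p := by
  rcases le_total B A with h | h
  · rcases eq_or_lt_of_le hA with rfl | hA'
    · rw [Real.zero_rpow (show p - 1 ≠ 0 by intro h; linarith [sub_eq_zero.mp h]),
        Real.zero_rpow (show p ≠ 0 by linarith), zero_mul, zero_add]
      exact Real.rpow_nonneg hB p
    · have h1 : A ^ (p-1) * B ≤ A ^ (p-1) * A :=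
        mul_le_mul_of_nonneg_left h (Real.rpow_nonneg hA _)
      have h2 : A ^ (p-1) * A = A ^ p := by
        rw [← Real.rpow_add_one (ne_of_gt hA')]; ring_nf
      nlinarith [Real.rpow_nonneg hB p]
  · have h1 : A ^ (p-1) ≤ B ^ (p-1) := Real.rpow_le_rpow hA h (by linarith)
    rcases eq_or_lt_of_le hB with rfl | hB'
    · have hA0 : A = 0 := le_antisymm h hA
      subst hA0
      rw [Real.zero_rpow (show p - 1 ≠ 0 by intro h; linarith [sub_eq_zero.mp h]),
        Real.zero_rpow (show p ≠ 0 by linarith), zero_mul, zero_add]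
    · have h2 : A ^ (p-1) * B ≤ B ^ (p-1) * B :=
        mul_le_mul_of_nonneg_right h1 hB
      have h3 : B ^ (p-1) * B = B ^ p := by
        rw [← Real.rpow_add_one (ne_of_gt hB')]; ring_nf
      nlinarith [Real.rpow_nonneg hA p]

/-- Sandwich bound: if `A/2 ≤ r ≤ 3A/2` then `r^(p-2) ≤ 2^β * A^(p-2)`. -/
lemma aux_sandwich (A r p β : ℝ) (hA : 0 < A) (h1 : A/2 ≤ r) (h2 : r ≤ 3*A/2)
    (hp : 1 < p) (hpβ : p ≤ β) :
    r ^ (p-2) ≤ (2:ℝ) ^ β * A ^ (p-2) := by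
  have hr : 0 < r := lt_of_lt_of_le (by linarith) h1
  rcases le_or_gt 2 p with hc | hc
  · have e1 : r ^ (p-2) ≤ (3*A/2) ^ (p-2) := Real.rpow_le_rpow hr.le h2 (by linarith)
    have e2 : (3*A/2 : ℝ) = (3/2) * A := by ring
    rw [e2, Real.mul_rpow (by norm_num) hA.le] at e1
    have e3 : (3/2 : ℝ) ^ (p-2) ≤ (2:ℝ) ^ (p-2) :=
      Real.rpow_le_rpow (by norm_num) (by norm_num) (by linarith)
    have e4 : (2:ℝ) ^ (p-2) ≤ (2:ℝ) ^ β :=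
      Real.rpow_le_rpow_of_exponent_le (by norm_num) (by linarith)
    calc r ^ (p-2) ≤ (3/2:ℝ)^(p-2) * A^(p-2) := e1
      _ ≤ (2:ℝ)^β * A^(p-2) := by
          apply mul_le_mul_of_nonneg_right (le_trans e3 e4) (Real.rpow_nonneg hA.le _)
  · have e1 : r ^ (p-2) ≤ (A/2) ^ (p-2) :=
      Real.rpow_le_rpow_of_nonpos (by linarith) h1 (by linarith)
    have e2 : (A/2 : ℝ) ^ (p-2) = A^(p-2) / (2:ℝ)^(p-2) :=
      Real.div_rpow hA.le (by norm_num) _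
    have e3 : (1:ℝ) ≤ (2:ℝ)^(p-2) * (2:ℝ)^β := by
      rw [← Real.rpow_add (by norm_num)]
      have : (0:ℝ) ≤ p - 2 + β := by nlinarith
      calc (1:ℝ) = (2:ℝ)^(0:ℝ) := by norm_num
        _ ≤ (2:ℝ)^(p-2+β) := Real.rpow_le_rpow_of_exponent_le (by norm_num) this
    have h2p : (0:ℝ) < (2:ℝ)^(p-2) := Real.rpow_pos_of_pos (by norm_num) _
    have : A^(p-2) / (2:ℝ)^(p-2) ≤ (2:ℝ)^β * A^(p-2) := by
      rw [div_le_iff₀ h2p]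
      nlinarith [Real.rpow_nonneg hA.le (p-2), Real.rpow_pos_of_pos hA (p-2)]
    linarith

/-- Case 1 core estimate: if `a + t•b` stays away from `0` on `[0,δ]`
(quantitatively `δ‖b‖ ≤ ‖a‖/2`), then the second-order Taylor error of
`t ↦ ‖a+t•b‖^p` is at most `β(β+1)2^β ‖a‖^{p-2} ‖b‖^2 δ^2`. -/
lemma aux_case1 {E : Type*} [NormedAddCommGroup E] [InnerProductSpace ℝ E]
    (p β δ : ℝ) (hp1 : 1 < p) (hpβ : p ≤ β) (hδ : 0 < δ)
    (a b : E) (ha : a ≠ 0) (hcond : δ * ‖b‖ ≤ ‖a‖ / 2) :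
    |‖a + δ • b‖ ^ p - ‖a‖ ^ p - δ * p * (‖a‖ ^ (p - 2) * ⟪a, b⟫)|
      ≤ β * (β+1) * (2:ℝ)^β * ‖a‖ ^ (p-2) * ‖b‖^2 * δ^2 := by
  set A := ‖a‖ with hA
  have hApos : 0 < A := norm_pos_iff.mpr ha
  set B := ‖b‖ with hB
  have hBnn : 0 ≤ B := norm_nonneg b
  set c : ℝ := ⟪a, b⟫ with hc
  set B2 : ℝ := ⟪b, b⟫ with hB2
  have hB2eq : B2 = B^2 := real_inner_self_eq_norm_sq b
  set Q : ℝ → ℝ := fun t => ⟪a, a⟫ + 2*c*t + B2*t^2 with hQdef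
  -- basic identities
  have hQinner : ∀ t : ℝ, ⟪a + t • b, a + t • b⟫ = Q t := by
    intro t
    rw [real_inner_add_add_self]
    simp only [real_inner_smul_left, real_inner_smul_right, hQdef]
    ring
  have hQnorm : ∀ t : ℝ, Q t = ‖a + t • b‖ ^ 2 := by
    intro t; rw [← hQinner t, real_inner_self_eq_norm_sq]
  have hIb : ∀ t : ℝ, ⟪a + t • b, b⟫ = c + B2 * t := by
    intro t
    rw [inner_add_left, real_inner_smul_left]; ring
  -- lower/upper sandwich of ‖a + t•b‖ on [0, δ]
  have hsand : ∀ t ∈ Set.Icc (0:ℝ) δ, A/2 ≤ ‖a + t • b‖ ∧ ‖a + t • b‖ ≤ 3*A/2 := by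
    intro t ht
    obtain ⟨ht0, htδ⟩ := ht
    have htB : t * B ≤ A / 2 := by
      calc t * B ≤ δ * B := by nlinarith
        _ ≤ A/2 := hcond
    have hnorm_smul : ‖t • b‖ = t * B := by
      rw [norm_smul, Real.norm_eq_abs, abs_of_nonneg ht0]
    constructor
    · have h4 : A ≤ ‖a + t • b‖ + t * B := by
        calc A = ‖(a + t • b) - t • b‖ := by rw [add_sub_cancel_right]
          _ ≤ ‖a + t • b‖ + ‖t • b‖ := norm_sub_le _ _
          _ = ‖a + t • b‖ + t * B := by rw [hnorm_smul]
      linarith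
    · calc ‖a + t • b‖ ≤ ‖a‖ + ‖t • b‖ := norm_add_le _ _
        _ = A + t * B := by rw [hnorm_smul]
        _ ≤ 3*A/2 := by linarith
  have hQpos : ∀ t ∈ Set.Icc (0:ℝ) δ, 0 < Q t := by
    intro t ht
    rw [hQnorm t]
    have := (hsand t ht).1
    nlinarith
  -- derivative of Q
  have hQderiv : ∀ t : ℝ, HasDerivAt Q (2*c + 2*B2*t) t := by
    intro t
    have h1 : HasDerivAt (fun s : ℝ => s^2) (2*t) t := by
      simpa using hasDerivAt_pow 2 t
    have h2 : HasDerivAt (fun s : ℝ => ⟪a,a⟫ + 2*c*s + B2*s^2)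
        (0 + 2*c*1 + B2*(2*t)) t := by
      exact (((hasDerivAt_const t ⟪a,a⟫).add ((hasDerivAt_id t).const_mul (2*c))).add
        (h1.const_mul B2))
    convert h2 using 1; ring
  -- f, g, g'
  set f : ℝ → ℝ := fun t => Q t ^ (p/2) with hfdef
  set g : ℝ → ℝ := fun t => p * Q t ^ (p/2 - 1) * (c + B2*t) with hgdef
  set g' : ℝ → ℝ := fun t =>
    p * ((p-2) * Q t ^ (p/2-1-1) * (c + B2*t)^2 + Q t ^ (p/2-1) * B2) with hg'def
  have hfderiv : ∀ t ∈ Set.Icc (0:ℝ) δ, HasDerivAt f (g t) t := by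
    intro t ht
    have := (hQderiv t).rpow_const (p := p/2) (Or.inl (ne_of_gt (hQpos t ht)))
    convert this using 1
    simp only [hgdef]; ring
  have hgderiv : ∀ t ∈ Set.Icc (0:ℝ) δ, HasDerivAt g (g' t) t := by
    intro t ht
    have h2 : HasDerivAt (fun s => Q s ^ (p/2-1))
        ((2*c + 2*B2*t) * (p/2-1) * Q t ^ (p/2-1-1)) t :=
      (hQderiv t).rpow_const (p := p/2-1) (Or.inl (ne_of_gt (hQpos t ht)))
    have h3 : HasDerivAt (fun s : ℝ => c + B2*s) B2 t := by
      simpa using ((hasDerivAt_id t).const_mul B2).const_add c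
    have h4 := (h2.mul h3).const_mul p
    have h5 : g = fun y => p * ((fun s => Q s ^ (p/2-1)) * fun s => c + B2*s) y := by
      funext s; simp only [hgdef, Pi.mul_apply]; ring
    rw [h5]
    refine h4.congr_deriv ?_
    simp only [hg'def]; ring
  -- bound on |g'| on [0,δ]
  set K : ℝ := β * (β+1) * (2:ℝ)^β * A ^ (p-2) * B^2 with hKdef
  have hβ1 : (1:ℝ) < β := lt_of_lt_of_le hp1 hpβ
  have hKnn : 0 ≤ K := by
    rw [hKdef]
    have h1 := Real.rpow_nonneg hApos.le (p-2)
    have h2 : (0:ℝ) ≤ (2:ℝ)^β := Real.rpow_nonneg (by norm_num) β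
    exact mul_nonneg (mul_nonneg (mul_nonneg (mul_nonneg (by linarith) (by linarith)) h2) h1)
      (sq_nonneg B)
  have hg'bound : ∀ t ∈ Set.Icc (0:ℝ) δ, |g' t| ≤ K := by
    intro t ht
    have hQt := hQpos t ht
    have hQe1 : (0:ℝ) ≤ Q t ^ (p/2-1) := Real.rpow_nonneg hQt.le _
    have hQe2 : (0:ℝ) ≤ Q t ^ (p/2-1-1) := Real.rpow_nonneg hQt.le _
    -- Cauchy–Schwarz : (c + B2 t)^2 ≤ Q t * B2
    have hCS : (c + B2*t)^2 ≤ Q t * B2 := by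
      have := real_inner_mul_inner_self_le (a + t • b) b
      rw [hIb t, hQinner t] at this
      calc (c + B2*t)^2 = (c + B2*t) * (c + B2*t) := pow_two _
        _ ≤ Q t * B2 := this
    have hstep : Q t ^ (p/2-1-1) * Q t = Q t ^ (p/2-1) := by
      rw [← Real.rpow_add_one (ne_of_gt hQt)]
      ring_nf
    have hQA : Q t ^ (p/2-1) ≤ (2:ℝ)^β * A^(p-2) := by
      have h1 : Q t ^ (p/2-1) = ‖a + t • b‖ ^ (p-2) := by
        have h2 : 2 * (p/2-1) = p - 2 := by ring
        rw [hQnorm t, aux_pow2_rpow _ _ (norm_nonneg _), h2]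
      rw [h1]
      exact aux_sandwich A _ p β hApos (hsand t ht).1 (hsand t ht).2 hp1 hpβ
    have hp2 : |p - 2| ≤ β := by
      rw [abs_le]; constructor <;> nlinarith
    -- main chain
    have hB2nn : 0 ≤ B2 := by rw [hB2eq]; positivity
    have e1 : |g' t| ≤ p * (|p-2| * (Q t ^ (p/2-1-1) * (c+B2*t)^2) + Q t ^ (p/2-1) * B2) := by
      simp only [hg'def]
      rw [abs_mul, abs_of_pos (by linarith : (0:ℝ) < p)]
      apply mul_le_mul_of_nonneg_left _ (by linarith : (0:ℝ) ≤ p)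
      calc |(p-2) * Q t ^ (p/2-1-1) * (c + B2*t)^2 + Q t ^ (p/2-1) * B2|
          ≤ |(p-2) * Q t ^ (p/2-1-1) * (c + B2*t)^2| + |Q t ^ (p/2-1) * B2| := abs_add_le _ _
        _ ≤ |p-2| * (Q t ^ (p/2-1-1) * (c+B2*t)^2) + Q t ^ (p/2-1) * B2 := by
            have e5 : |(p-2) * Q t ^ (p/2-1-1) * (c + B2*t)^2|
                = |p-2| * (Q t ^ (p/2-1-1) * (c+B2*t)^2) := by
              rw [abs_mul, abs_mul, abs_of_nonneg hQe2, abs_of_nonneg (sq_nonneg (c + B2*t)), mul_assoc]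
            have e6 : |Q t ^ (p/2-1) * B2| = Q t ^ (p/2-1) * B2 :=
              abs_of_nonneg (mul_nonneg hQe1 hB2nn)
            rw [e5, e6]
    have e2 : Q t ^ (p/2-1-1) * (c+B2*t)^2 ≤ Q t ^ (p/2-1) * B2 := by
      calc Q t ^ (p/2-1-1) * (c+B2*t)^2 ≤ Q t ^ (p/2-1-1) * (Q t * B2) :=
            mul_le_mul_of_nonneg_left hCS hQe2
        _ = Q t ^ (p/2-1) * B2 := by rw [← hstep]; ring
    have e3 : Q t ^ (p/2-1) * B2 ≤ (2:ℝ)^β * A^(p-2) * B^2 := by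
      rw [hB2eq]
      exact mul_le_mul_of_nonneg_right hQA (sq_nonneg B)
    have e4 : |p-2| + 1 ≤ β + 1 := by linarith
    have hfin : 0 ≤ (2:ℝ)^β * A^(p-2) * B^2 := by
      have := Real.rpow_nonneg hApos.le (p-2)
      have h2 : (0:ℝ) ≤ (2:ℝ)^β := Real.rpow_nonneg (by norm_num) β
      nlinarith [sq_nonneg B]
    calc |g' t| ≤ p * (|p-2| * (Q t ^ (p/2-1-1) * (c+B2*t)^2) + Q t ^ (p/2-1) * B2) := e1
      _ ≤ p * (|p-2| * (Q t ^ (p/2-1) * B2) + Q t ^ (p/2-1) * B2) := by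
          apply mul_le_mul_of_nonneg_left _ (by linarith : (0:ℝ) ≤ p)
          have := mul_le_mul_of_nonneg_left e2 (abs_nonneg (p-2))
          linarith
      _ = p * (|p-2| + 1) * (Q t ^ (p/2-1) * B2) := by ring
      _ ≤ β * (β+1) * ((2:ℝ)^β * A^(p-2) * B^2) := by
          have hx : 0 ≤ Q t ^ (p/2-1) * B2 := mul_nonneg hQe1 hB2nn
          have h5 : p * (|p-2|+1) ≤ β * (β+1) := by nlinarith [abs_nonneg (p-2)]
          have h6 : p * (|p-2|+1) * (Q t ^ (p/2-1) * B2) ≤ β * (β+1) * (Q t ^ (p/2-1) * B2) :=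
            mul_le_mul_of_nonneg_right h5 hx
          have h7 : β * (β+1) * (Q t ^ (p/2-1) * B2) ≤ β * (β+1) * ((2:ℝ)^β * A^(p-2) * B^2) :=
            mul_le_mul_of_nonneg_left e3 (by nlinarith)
          linarith
      _ = K := by rw [hKdef]; ring
  -- mean value, first application: |g t - g 0| ≤ K * t ≤ K * δ on [0,δ]
  have hconv : Convex ℝ (Set.Icc (0:ℝ) δ) := convex_Icc 0 δ
  have hg_lip : ∀ t ∈ Set.Icc (0:ℝ) δ, |g t - g 0| ≤ K * δ := by
    intro t ht
    have h0 : (0:ℝ) ∈ Set.Icc (0:ℝ) δ := ⟨le_refl 0, hδ.le⟩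
    have := Convex.norm_image_sub_le_of_norm_hasDerivWithin_le
      (f := g) (f' := g') (s := Set.Icc (0:ℝ) δ)
      (fun x hx => (hgderiv x hx).hasDerivWithinAt)
      (fun x hx => by rw [Real.norm_eq_abs]; exact hg'bound x hx) hconv h0 ht
    rw [Real.norm_eq_abs, Real.norm_eq_abs, sub_zero] at this
    calc |g t - g 0| ≤ K * |t| := this
      _ ≤ K * δ := by
          apply mul_le_mul_of_nonneg_left _ hKnn
          rw [abs_of_nonneg ht.1]; exact ht.2
  -- second application: h t := f t - g 0 * t
  set h : ℝ → ℝ := fun t => f t - g 0 * t with hhdef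
  have hh : |h δ - h 0| ≤ (K * δ) * δ := by
    have h0 : (0:ℝ) ∈ Set.Icc (0:ℝ) δ := ⟨le_refl 0, hδ.le⟩
    have hδmem : δ ∈ Set.Icc (0:ℝ) δ := ⟨hδ.le, le_refl δ⟩
    have := Convex.norm_image_sub_le_of_norm_hasDerivWithin_le
      (f := h) (f' := fun t => g t - g 0) (s := Set.Icc (0:ℝ) δ)
      (fun x hx => by
        have h1 : HasDerivAt (fun t : ℝ => g 0 * t) (g 0) x := by
          simpa using (hasDerivAt_id x).const_mul (g 0)
        exact ((hfderiv x hx).sub h1).hasDerivWithinAt)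
      (fun x hx => by rw [Real.norm_eq_abs]; exact hg_lip x hx) hconv h0 hδmem
    rw [Real.norm_eq_abs, Real.norm_eq_abs, sub_zero] at this
    calc |h δ - h 0| ≤ K * δ * |δ| := this
      _ = K * δ * δ := by rw [abs_of_nonneg hδ.le]
  -- identify h δ - h 0 with the goal expression
  have hf_at : ∀ t : ℝ, f t = ‖a + t • b‖ ^ p := by
    intro t
    simp only [hfdef]
    have h2 : 2 * (p/2) = p := by ring
    rw [hQnorm t, aux_pow2_rpow _ _ (norm_nonneg _), h2]
  have hf0 : f 0 = A ^ p := by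
    rw [hf_at 0]
    norm_num
    rfl
  have hg0 : g 0 = p * (A ^ (p-2) * c) := by
    simp only [hgdef]
    have hQ0 : Q 0 = A^2 := by rw [hQnorm 0]; norm_num; rfl
    rw [hQ0, aux_pow2_rpow _ _ hApos.le]
    have : 2 * (p/2 - 1) = p - 2 := by ring
    rw [this]; ring
  have hkey : ‖a + δ • b‖ ^ p - ‖a‖ ^ p - δ * p * (‖a‖ ^ (p - 2) * ⟪a, b⟫)
      = h δ - h 0 := by
    simp only [hhdef]
    rw [hf_at δ, hf0, hg0]
    ring
  rw [hkey]
  calc |h δ - h 0| ≤ K * δ * δ := hh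
    _ = β * (β+1) * (2:ℝ)^β * A ^ (p-2) * B^2 * δ^2 := by rw [hKdef]; ring

/-- the elementary inequality used in Lemma `l_sol-2sca`: for every
`ε > 0` there is `δ₀ ∈ (0,1)` such that for all `p ∈ [α,β]`, all `δ ∈ (0,δ₀]` and all
`a, b ∈ ℝ^n`:
`| |a+δb|^p − |a|^p − δ p |a|^{p−2} (a·b) | ≤ ε δ (|a|^p + |b|^p)`.
(Here `|a|^{p-2}(a·b)` vanishes for `a = 0` since `a·b = 0`, matching the convention
`|a|^{p-2} a = 0` for `a = 0`.) -/
theorem stmt16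
    {n : ℕ} (hn : 1 ≤ n)
    (α β : ℝ) (hα : 1 < α) (hαβ : α ≤ β) :
    ∀ ε : ℝ, 0 < ε → ∃ δ₀ : ℝ, 0 < δ₀ ∧ δ₀ < 1 ∧
      ∀ p : ℝ, α ≤ p → p ≤ β →
      ∀ δ : ℝ, 0 < δ → δ ≤ δ₀ →
      ∀ a b : EuclideanSpace ℝ (Fin n),
        |‖a + δ • b‖ ^ p - ‖a‖ ^ p - δ * p * (‖a‖ ^ (p - 2) * ⟪a, b⟫)|
          ≤ ε * δ * (‖a‖ ^ p + ‖b‖ ^ p) := by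
  intro ε hε
  have hβ1 : (1:ℝ) < β := lt_of_lt_of_le hα hαβ
  set C1 : ℝ := β * (β+1) * (2:ℝ)^β with hC1def
  have hC1 : 0 < C1 := by
    apply mul_pos (mul_pos (by linarith) (by linarith)) (Real.rpow_pos_of_pos two_pos β)
  set η : ℝ := min (1/2) (ε / C1) with hηdef
  have hηpos : 0 < η := lt_min (by norm_num) (div_pos hε hC1)
  have hη2 : η ≤ 1/2 := min_le_left _ _
  have hηC1 : C1 * η ≤ ε := by
    have h1 : η ≤ ε / C1 := min_le_right _ _
    calc C1 * η ≤ C1 * (ε / C1) := mul_le_mul_of_nonneg_left h1 hC1.le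
      _ = ε := by field_simp
  have h2η : (1:ℝ) ≤ 2/η := by
    rw [le_div_iff₀ hηpos]; linarith
  have h2ηpos : (0:ℝ) < 2/η := by linarith
  set C2 : ℝ := (2+β) * (2/η)^β with hC2def
  have hC2 : 0 < C2 := mul_pos (by linarith) (Real.rpow_pos_of_pos h2ηpos β)
  set δ₀ : ℝ := min (η/2) ((ε/C2) ^ ((α-1)⁻¹)) with hδ₀def
  have hδ₀pos : 0 < δ₀ :=
    lt_min (by linarith) (Real.rpow_pos_of_pos (div_pos hε hC2) _)
  have hδ₀η : δ₀ ≤ η/2 := min_le_left _ _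
  have hδ₀lt1 : δ₀ < 1 := lt_of_le_of_lt hδ₀η (by linarith)
  have hδ₀ineq : C2 * δ₀ ^ (α-1) ≤ ε := by
    have h1 : δ₀ ≤ (ε/C2) ^ ((α-1)⁻¹) := min_le_right _ _
    have h2 : δ₀ ^ (α-1) ≤ ((ε/C2) ^ ((α-1)⁻¹)) ^ (α-1) :=
      Real.rpow_le_rpow hδ₀pos.le h1 (by linarith)
    have h3 : ((ε/C2) ^ ((α-1)⁻¹)) ^ (α-1) = ε/C2 := by
      rw [← Real.rpow_mul (div_nonneg hε.le hC2.le),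
        inv_mul_cancel₀ (show α - 1 ≠ 0 by intro h; nlinarith [sub_eq_zero.mp h]),
        Real.rpow_one]
    rw [h3] at h2
    calc C2 * δ₀ ^ (α-1) ≤ C2 * (ε/C2) := mul_le_mul_of_nonneg_left h2 hC2.le
      _ = ε := by field_simp
  refine ⟨δ₀, hδ₀pos, hδ₀lt1, ?_⟩
  intro p hαp hpβ δ hδ hδδ₀ a b
  have hp1 : 1 < p := lt_of_lt_of_le hα hαp
  have hAnn : (0:ℝ) ≤ ‖a‖ := norm_nonneg a
  have hBnn : (0:ℝ) ≤ ‖b‖ := norm_nonneg b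
  by_cases hcase : δ * ‖b‖ ≤ η * ‖a‖
  · -- CASE 1 : δ‖b‖ ≤ η‖a‖
    by_cases ha : a = 0
    · -- trivial subcase : a = 0 hence b = 0
      subst ha
      have hb : b = 0 := by
        have h1 : ‖b‖ ≤ 0 := by
          have h2 : δ * ‖b‖ ≤ 0 := by simpa using hcase
          nlinarith
        exact norm_le_zero_iff.mp (by linarith)
      subst hb
      simp [Real.zero_rpow (show p ≠ 0 by linarith)]
    · have hApos : 0 < ‖a‖ := norm_pos_iff.mpr ha
      have hcond : δ * ‖b‖ ≤ ‖a‖ / 2 := le_trans hcase (by nlinarith)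
      have key := aux_case1 p β δ hp1 hpβ hδ a b ha hcond
      refine le_trans key ?_
      have hApnn : 0 ≤ ‖a‖ ^ (p-2) := Real.rpow_nonneg hAnn _
      have hstep : ‖a‖ ^ (p-2) * ‖a‖ = ‖a‖ ^ (p-1) := by
        rw [← Real.rpow_add_one (ne_of_gt hApos)]
        ring_nf
      have hyoung : ‖a‖ ^ (p-1) * ‖b‖ ≤ ‖a‖ ^ p + ‖b‖ ^ p :=
        aux_young _ _ p hAnn hBnn hp1
      have h2βnn : (0:ℝ) ≤ (2:ℝ)^β := Real.rpow_nonneg (by norm_num) β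
      have step1 : C1 * (‖a‖ ^ (p-2) * ‖b‖ * (δ * ‖b‖)) * δ
          ≤ C1 * (‖a‖ ^ (p-2) * ‖b‖ * (η * ‖a‖)) * δ := by
        apply mul_le_mul_of_nonneg_right _ hδ.le
        apply mul_le_mul_of_nonneg_left _ hC1.le
        exact mul_le_mul_of_nonneg_left hcase (mul_nonneg hApnn hBnn)
      have step2 : C1 * (‖a‖ ^ (p-2) * ‖b‖ * (η * ‖a‖)) * δ
          = (C1 * η) * (‖a‖ ^ (p-1) * ‖b‖) * δ := by
        rw [← hstep]; ring
      have step3 : (C1 * η) * (‖a‖ ^ (p-1) * ‖b‖) ≤ ε * (‖a‖ ^ p + ‖b‖ ^ p) := by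
        apply mul_le_mul hηC1 hyoung (mul_nonneg (Real.rpow_nonneg hAnn _) hBnn) hε.le
      calc β * (β+1) * (2:ℝ)^β * ‖a‖ ^ (p-2) * ‖b‖^2 * δ^2
          = C1 * (‖a‖ ^ (p-2) * ‖b‖ * (δ * ‖b‖)) * δ := by rw [hC1def]; ring
        _ ≤ C1 * (‖a‖ ^ (p-2) * ‖b‖ * (η * ‖a‖)) * δ := step1
        _ = (C1 * η) * (‖a‖ ^ (p-1) * ‖b‖) * δ := step2
        _ ≤ ε * (‖a‖ ^ p + ‖b‖ ^ p) * δ :=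
            mul_le_mul_of_nonneg_right step3 hδ.le
        _ = ε * δ * (‖a‖ ^ p + ‖b‖ ^ p) := by ring
  · -- CASE 2 : η‖a‖ < δ‖b‖
    push_neg at hcase
    have hBpos : 0 < ‖b‖ := by
      rcases lt_or_eq_of_le hBnn with h | h
      · exact h
      · exfalso; rw [← h] at hcase; nlinarith
    have hδη : δ ≤ η/2 := le_trans hδδ₀ hδ₀η
    set w : ℝ := 2*δ/η with hwdef
    have hw0 : 0 < w := by positivity
    have hw1 : w ≤ 1 := by
      rw [hwdef, div_le_one hηpos]; linarith
    have hwsplit : w = (2/η) * δ := by rw [hwdef]; ring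
    have hAw : ‖a‖ ≤ w * ‖b‖ := by
      have h1 : ‖a‖ < δ * ‖b‖ / η := by
        rw [lt_div_iff₀ hηpos]; nlinarith
      have h2 : δ * ‖b‖ / η ≤ w * ‖b‖ := by
        have e : w * ‖b‖ = 2 * δ * ‖b‖ / η := by rw [hwdef]; ring
        rw [e]
        gcongr
        nlinarith [mul_nonneg hδ.le hBnn]
      linarith
    have hNw : ‖a + δ • b‖ ≤ w * ‖b‖ := by
      have h1 : ‖a + δ • b‖ ≤ ‖a‖ + δ * ‖b‖ := by
        calc ‖a + δ • b‖ ≤ ‖a‖ + ‖δ • b‖ := norm_add_le _ _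
          _ = ‖a‖ + δ * ‖b‖ := by rw [norm_smul, Real.norm_eq_abs, abs_of_nonneg hδ.le]
      have h2 : ‖a‖ + δ * ‖b‖ ≤ δ * ‖b‖ / η + δ * ‖b‖ / η := by
        have h3 : ‖a‖ ≤ δ * ‖b‖ / η := by
          rw [le_div_iff₀ hηpos]; nlinarith
        have h4 : δ * ‖b‖ ≤ δ * ‖b‖ / η := by
          rw [le_div_iff₀ hηpos]; nlinarith [mul_pos hδ hBpos]
        linarith
      have h5 : δ * ‖b‖ / η + δ * ‖b‖ / η = w * ‖b‖ := by
        rw [hwdef]; ring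
      linarith
    -- the two exponent bounds
    have hMdef : w ^ p ≤ (2/η)^β * δ₀^(α-1) * δ := by
      have e1 : w ^ p ≤ w ^ α := Real.rpow_le_rpow_of_exponent_ge hw0 hw1 hαp
      have e2 : w ^ α = (2/η)^α * δ^α := by
        rw [hwsplit, Real.mul_rpow h2ηpos.le hδ.le]
      have e3 : (2/η)^α ≤ (2/η)^β := Real.rpow_le_rpow_of_exponent_le h2η hαβ
      have e4 : δ^α = δ^(α-1) * δ := by
        rw [← Real.rpow_add_one (ne_of_gt hδ)]; ring_nf
      have e5 : δ^(α-1) ≤ δ₀^(α-1) := Real.rpow_le_rpow hδ.le hδδ₀ (by linarith)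
      calc w ^ p ≤ (2/η)^α * δ^α := by rw [← e2]; exact e1
        _ = (2/η)^α * δ^(α-1) * δ := by rw [e4]; ring
        _ ≤ (2/η)^β * δ₀^(α-1) * δ := by
            have g1 : (0:ℝ) ≤ δ^(α-1) := Real.rpow_nonneg hδ.le _
            have g2 : (0:ℝ) ≤ (2/η)^β := Real.rpow_nonneg h2ηpos.le _
            apply mul_le_mul_of_nonneg_right _ hδ.le
            calc (2/η)^α * δ^(α-1) ≤ (2/η)^β * δ^(α-1) :=
                  mul_le_mul_of_nonneg_right e3 g1
              _ ≤ (2/η)^β * δ₀^(α-1) := mul_le_mul_of_nonneg_left e5 g2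
    have hM2 : w ^ (p-1) ≤ (2/η)^β * δ₀^(α-1) := by
      have e1 : w ^ (p-1) ≤ w ^ (α-1) :=
        Real.rpow_le_rpow_of_exponent_ge hw0 hw1 (by linarith)
      have e2 : w ^ (α-1) = (2/η)^(α-1) * δ^(α-1) := by
        rw [hwsplit, Real.mul_rpow h2ηpos.le hδ.le]
      have e3 : (2/η)^(α-1) ≤ (2/η)^β :=
        Real.rpow_le_rpow_of_exponent_le h2η (by linarith)
      have e5 : δ^(α-1) ≤ δ₀^(α-1) := Real.rpow_le_rpow hδ.le hδδ₀ (by linarith)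
      have g1 : (0:ℝ) ≤ δ^(α-1) := Real.rpow_nonneg hδ.le _
      have g2 : (0:ℝ) ≤ (2/η)^β := Real.rpow_nonneg h2ηpos.le _
      calc w ^ (p-1) ≤ (2/η)^(α-1) * δ^(α-1) := by rw [← e2]; exact e1
        _ ≤ (2/η)^β * δ^(α-1) := mul_le_mul_of_nonneg_right e3 g1
        _ ≤ (2/η)^β * δ₀^(α-1) := mul_le_mul_of_nonneg_left e5 g2
    set M : ℝ := (2/η)^β * δ₀^(α-1) with hMd
    have hMnn : 0 ≤ M :=
      mul_nonneg (Real.rpow_nonneg h2ηpos.le _) (Real.rpow_nonneg hδ₀pos.le _)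
    have hBp : (0:ℝ) ≤ ‖b‖ ^ p := Real.rpow_nonneg hBnn _
    -- T1
    have hT1 : ‖a + δ • b‖ ^ p ≤ M * δ * ‖b‖ ^ p := by
      calc ‖a + δ • b‖ ^ p ≤ (w * ‖b‖) ^ p :=
            Real.rpow_le_rpow (norm_nonneg _) hNw (by linarith)
        _ = w ^ p * ‖b‖ ^ p := Real.mul_rpow hw0.le hBnn
        _ ≤ ((2/η)^β * δ₀^(α-1) * δ) * ‖b‖ ^ p := mul_le_mul_of_nonneg_right hMdef hBp
        _ = M * δ * ‖b‖ ^ p := by rw [hMd]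
    -- T2
    have hT2 : ‖a‖ ^ p ≤ M * δ * ‖b‖ ^ p := by
      calc ‖a‖ ^ p ≤ (w * ‖b‖) ^ p := Real.rpow_le_rpow hAnn hAw (by linarith)
        _ = w ^ p * ‖b‖ ^ p := Real.mul_rpow hw0.le hBnn
        _ ≤ ((2/η)^β * δ₀^(α-1) * δ) * ‖b‖ ^ p := mul_le_mul_of_nonneg_right hMdef hBp
        _ = M * δ * ‖b‖ ^ p := by rw [hMd]
    -- T3
    have hT3 : ‖a‖ ^ (p-2) * |⟪a, b⟫| ≤ M * ‖b‖ ^ p := by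
      have hstep : ‖a‖ ^ (p-2) * |⟪a, b⟫| ≤ ‖a‖ ^ (p-1) * ‖b‖ := by
        by_cases ha : a = 0
        · subst ha
          simp only [inner_zero_left, abs_zero, mul_zero]
          exact mul_nonneg (Real.rpow_nonneg (norm_nonneg _) _) hBnn
        · have hApos : 0 < ‖a‖ := norm_pos_iff.mpr ha
          have hCS : |⟪a, b⟫| ≤ ‖a‖ * ‖b‖ := abs_real_inner_le_norm a b
          have h2 : ‖a‖ ^ (p-2) * ‖a‖ = ‖a‖ ^ (p-1) := by
            rw [← Real.rpow_add_one (ne_of_gt hApos)]; ring_nf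
          calc ‖a‖ ^ (p-2) * |⟪a, b⟫| ≤ ‖a‖ ^ (p-2) * (‖a‖ * ‖b‖) :=
                mul_le_mul_of_nonneg_left hCS (Real.rpow_nonneg hAnn _)
            _ = ‖a‖ ^ (p-1) * ‖b‖ := by rw [← h2]; ring
      have h3 : ‖a‖ ^ (p-1) ≤ w^(p-1) * ‖b‖^(p-1) := by
        calc ‖a‖ ^ (p-1) ≤ (w * ‖b‖) ^ (p-1) :=
              Real.rpow_le_rpow hAnn hAw (by linarith)
          _ = w ^ (p-1) * ‖b‖ ^ (p-1) := Real.mul_rpow hw0.le hBnn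
      have h4 : ‖b‖^(p-1) * ‖b‖ = ‖b‖^p := by
        rw [← Real.rpow_add_one (ne_of_gt hBpos)]; ring_nf
      have h5 : ‖a‖ ^ (p-1) * ‖b‖ ≤ w^(p-1) * ‖b‖^p := by
        calc ‖a‖ ^ (p-1) * ‖b‖ ≤ (w^(p-1) * ‖b‖^(p-1)) * ‖b‖ :=
              mul_le_mul_of_nonneg_right h3 hBnn
          _ = w^(p-1) * (‖b‖^(p-1) * ‖b‖) := by ring
          _ = w^(p-1) * ‖b‖^p := by rw [h4]
      have h6 : w^(p-1) * ‖b‖^p ≤ M * ‖b‖^p := mul_le_mul_of_nonneg_right hM2 hBp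
      linarith
    -- assemble
    have habs : |‖a + δ • b‖ ^ p - ‖a‖ ^ p - δ * p * (‖a‖ ^ (p - 2) * ⟪a, b⟫)|
        ≤ ‖a + δ • b‖ ^ p + ‖a‖ ^ p + δ * p * (‖a‖ ^ (p-2) * |⟪a, b⟫|) := by
      have h1 : |‖a + δ • b‖ ^ p - ‖a‖ ^ p - δ * p * (‖a‖ ^ (p - 2) * ⟪a, b⟫)|
          ≤ |‖a + δ • b‖ ^ p - ‖a‖ ^ p| + |δ * p * (‖a‖ ^ (p - 2) * ⟪a, b⟫)| :=
        abs_sub _ _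
      have h2 : |‖a + δ • b‖ ^ p - ‖a‖ ^ p| ≤ |‖a + δ • b‖ ^ p| + |‖a‖ ^ p| := abs_sub _ _
      have h3 : |‖a + δ • b‖ ^ p| = ‖a + δ • b‖ ^ p := abs_of_nonneg (Real.rpow_nonneg (norm_nonneg _) _)
      have h4 : |‖a‖ ^ p| = ‖a‖ ^ p := abs_of_nonneg (Real.rpow_nonneg hAnn _)
      have h5 : |δ * p * (‖a‖ ^ (p - 2) * ⟪a, b⟫)| = δ * p * (‖a‖ ^ (p-2) * |⟪a, b⟫|) := by
        rw [abs_mul, abs_mul, abs_mul, abs_of_nonneg hδ.le,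
          abs_of_nonneg (by linarith : (0:ℝ) ≤ p),
          abs_of_nonneg (Real.rpow_nonneg hAnn _)]
      rw [h3, h4] at h2
      rw [h5] at h1
      linarith
    have hfinal : ‖a + δ • b‖ ^ p + ‖a‖ ^ p + δ * p * (‖a‖ ^ (p-2) * |⟪a, b⟫|)
        ≤ ε * δ * ‖b‖ ^ p := by
      have hZ : δ * p * (‖a‖ ^ (p-2) * |⟪a, b⟫|) ≤ β * M * δ * ‖b‖ ^ p := by
        have h1 : δ * p * (‖a‖ ^ (p-2) * |⟪a, b⟫|) ≤ δ * p * (M * ‖b‖ ^ p) := by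
          apply mul_le_mul_of_nonneg_left hT3 (mul_nonneg hδ.le (by linarith))
        have h2 : δ * p * (M * ‖b‖ ^ p) ≤ δ * β * (M * ‖b‖ ^ p) := by
          apply mul_le_mul_of_nonneg_right _ (mul_nonneg hMnn hBp)
          exact mul_le_mul_of_nonneg_left hpβ hδ.le
        calc δ * p * (‖a‖ ^ (p-2) * |⟪a, b⟫|) ≤ δ * p * (M * ‖b‖ ^ p) := h1
          _ ≤ δ * β * (M * ‖b‖ ^ p) := h2
          _ = β * M * δ * ‖b‖ ^ p := by ring
      have hsum : ‖a + δ • b‖ ^ p + ‖a‖ ^ p + δ * p * (‖a‖ ^ (p-2) * |⟪a, b⟫|)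
          ≤ (2 + β) * M * δ * ‖b‖ ^ p := by
        have e : (2+β) * M * δ * ‖b‖ ^ p
            = M * δ * ‖b‖ ^ p + M * δ * ‖b‖ ^ p + β * M * δ * ‖b‖ ^ p := by ring
        linarith [hT1, hT2, hZ]
      have hC2M : (2 + β) * M ≤ ε := by
        rw [hMd]
        calc (2+β) * ((2/η)^β * δ₀^(α-1)) = C2 * δ₀^(α-1) := by rw [hC2def]; ring
          _ ≤ ε := hδ₀ineq
      calc ‖a + δ • b‖ ^ p + ‖a‖ ^ p + δ * p * (‖a‖ ^ (p-2) * |⟪a, b⟫|)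
          ≤ (2 + β) * M * δ * ‖b‖ ^ p := hsum
        _ = (2 + β) * M * (δ * ‖b‖ ^ p) := by ring
        _ ≤ ε * (δ * ‖b‖ ^ p) :=
            mul_le_mul_of_nonneg_right hC2M (mul_nonneg hδ.le hBp)
        _ = ε * δ * ‖b‖ ^ p := by ring
      
    have hRHS : ε * δ * ‖b‖ ^ p ≤ ε * δ * (‖a‖ ^ p + ‖b‖ ^ p) := by
      have hAp : (0:ℝ) ≤ ‖a‖ ^ p := Real.rpow_nonneg hAnn _
      have := mul_nonneg (mul_nonneg hε.le hδ.le) hAp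
      nlinarith
    linarith
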